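/- Let d ≥ 1, c₁ > 0, γ₁ ∈ (0,1], ε > 0, and set η := (132εd·2^{1−γ₁}/c₁)^{1/(1+γ₁)}; assume η ≤ 1/4. Then for every z ∈ ℝ^d, the restriction of the bump function f_{2ε,η,z} to [0,1]^d is (c₁,γ₁)-gradient-Hölder; in particular, f_{2ε,η,z} is continuously differentiable on ℝ^d and ‖∇f_{2ε,η,z}(x) − ∇f_{2ε,η,z}(y)‖_∞ ≤ c₁‖x − y‖_∞^{γ₁} for all x, y ∈ [0,1]^d. -/

import Mathlib

noncomputable section
open Real Set Filter Topology ContDiff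

/-- The unit hypercube `[0,1]^d`, as a subset of `Fin d → ℝ` (equipped with the sup-norm). -/
def unitCube (d : ℕ) : Set (Fin d → ℝ) := Set.Icc 0 1

/-- The `j`-th partial derivatives of `F`, collected into a vector of `Fin d → ℝ`. -/
noncomputable def gradVec (d : ℕ) (F : (Fin d → ℝ) → ℝ) (x : Fin d → ℝ) : Fin d → ℝ :=
  fun j => fderiv ℝ F x (Pi.single j 1)

/-- `f` is `(c₁,γ₁)`-gradient-Hölder on `E`: it is the restriction to `E` of a `C¹` function
on `ℝ^d` whose gradient is `(c₁,γ₁)`-Hölder on `E` w.r.t. the sup-norm. -/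
def GradHolderOn (d : ℕ) (c₁ γ₁ : ℝ) (E : Set (Fin d → ℝ)) (f : (Fin d → ℝ) → ℝ) : Prop :=
  ∃ F : (Fin d → ℝ) → ℝ, ContDiff ℝ 1 F ∧ Set.EqOn f F E ∧
    ∀ x ∈ E, ∀ y ∈ E, ‖gradVec d F x - gradVec d F y‖ ≤ c₁ * ‖x - y‖ ^ γ₁

/-- The one-dimensional bump function `f̃(x) = exp(-x²/(1-x²))` on `(-1,1)`, `0` elsewhere. -/
noncomputable def bump1 (x : ℝ) : ℝ :=
  if x ∈ Set.Ioo (-1 : ℝ) 1 then Real.exp (-x ^ 2 / (1 - x ^ 2)) else 0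

/-- The `d`-dimensional bump `f_{α,η,z}(x) = α ∏_j f̃((x_j - z_j)/η)`. -/
noncomputable def bump (d : ℕ) (α η : ℝ) (z : Fin d → ℝ) (x : Fin d → ℝ) : ℝ :=
  α * ∏ j, bump1 ((x j - z j) / η)

namespace S12

lemma exp_key {s : ℝ} (hs : 0 < s) (n : ℕ) (hn : 0 < n) :
    Real.exp (-s⁻¹) * Real.exp 1 ^ n ≤ ((n : ℝ) * s) ^ n := by
  have hn' : (0:ℝ) < n := by exact_mod_cast hn
  have hns : 0 < (n : ℝ) * s := by positivity
  have h1 : Real.exp (1 - ((n : ℝ) * s)⁻¹) ≤ (n : ℝ) * s := by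
    have h2 := Real.add_one_le_exp (((n : ℝ) * s)⁻¹ - 1)
    have h3 : ((n:ℝ)*s)⁻¹ ≤ Real.exp (((n : ℝ) * s)⁻¹ - 1) := by linarith
    have h4 : Real.exp (1 - ((n : ℝ) * s)⁻¹) = (Real.exp (((n : ℝ) * s)⁻¹ - 1))⁻¹ := by
      rw [← Real.exp_neg]; ring_nf
    rw [h4]
    calc (Real.exp (((n : ℝ) * s)⁻¹ - 1))⁻¹ ≤ (((n:ℝ)*s)⁻¹)⁻¹ :=
          inv_anti₀ (by positivity) h3
      _ = (n:ℝ) * s := inv_inv _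
  calc Real.exp (-s⁻¹) * Real.exp 1 ^ n = Real.exp (1 - ((n : ℝ) * s)⁻¹) ^ n := by
        rw [← Real.exp_nat_mul, ← Real.exp_nat_mul, ← Real.exp_add]
        congr 1
        field_simp
        ring
    _ ≤ ((n : ℝ) * s) ^ n := pow_le_pow_left₀ (Real.exp_nonneg _) h1 n
end S12

namespace S12

lemma exp_key2 {s : ℝ} (hs : 0 < s) : Real.exp (-s⁻¹) * Real.exp 1 ^ 2 ≤ 4 * s ^ 2 := by
  have := exp_key hs 2 (by norm_num)
  nlinarith [this]

lemma exp_key4 {s : ℝ} (hs : 0 < s) : Real.exp (-s⁻¹) * Real.exp 1 ^ 4 ≤ 256 * s ^ 4 := by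
  have := exp_key hs 4 (by norm_num)
  nlinarith [this]

lemma bump1_eq (x : ℝ) : bump1 x = Real.exp 1 * expNegInvGlue (1 - x ^ 2) := by
  unfold bump1
  by_cases hx : x ∈ Set.Ioo (-1 : ℝ) 1
  · obtain ⟨h, h'⟩ := hx
    have h1 : 0 < 1 - x ^ 2 := by nlinarith
    rw [if_pos ⟨h, h'⟩, expNegInvGlue, if_neg (not_le.2 h1), ← Real.exp_add]
    congr 1
    field_simp
    ring
  · have h1 : 1 - x ^ 2 ≤ 0 := by
      simp only [Set.mem_Ioo, not_and_or, not_lt] at hx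
      rcases hx with h | h <;> nlinarith
    rw [if_neg hx, expNegInvGlue.zero_of_nonpos h1, mul_zero]

lemma bump1_contDiff {n : ℕ∞} : ContDiff ℝ n bump1 := by
  have h : ContDiff ℝ n fun x : ℝ => Real.exp 1 * expNegInvGlue (1 - x ^ 2) :=
    contDiff_const.mul (expNegInvGlue.contDiff.comp (contDiff_const.sub (contDiff_id.pow 2)))
  have he : bump1 = fun x : ℝ => Real.exp 1 * expNegInvGlue (1 - x ^ 2) := funext bump1_eq
  rw [he]
  exact h

lemma bump1_nonneg (x : ℝ) : 0 ≤ bump1 x := by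
  unfold bump1; split
  · exact (Real.exp_pos _).le
  · exact le_refl 0

lemma bump1_le_one (x : ℝ) : bump1 x ≤ 1 := by
  unfold bump1; split
  · rename_i hx
    obtain ⟨h, h'⟩ := hx
    rw [Real.exp_le_one_iff]
    apply div_nonpos_of_nonpos_of_nonneg <;> nlinarith
  · norm_num

end S12

namespace S12

noncomputable def D1 (x : ℝ) : ℝ :=
  Real.exp 1 * Real.exp (-(1 - x ^ 2)⁻¹) * (-(2 * x) / (1 - x ^ 2) ^ 2)

noncomputable def D2 (x : ℝ) : ℝ :=
  Real.exp 1 * Real.exp (-(1 - x ^ 2)⁻¹) *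
    ((4 * x ^ 2 - 2 * (1 - x ^ 2) ^ 2 - 8 * x ^ 2 * (1 - x ^ 2)) / (1 - x ^ 2) ^ 4)

lemma isOpen_lt1 : IsOpen {y : ℝ | y ^ 2 < 1} := isOpen_lt (continuous_pow 2) continuous_const

lemma isOpen_gt1 : IsOpen {y : ℝ | 1 < y ^ 2} := isOpen_lt continuous_const (continuous_pow 2)

lemma bump1_eventually_phi {x : ℝ} (hx : x ^ 2 < 1) :
    bump1 =ᶠ[𝓝 x] fun y => Real.exp 1 * Real.exp (-(1 - y ^ 2)⁻¹) := by
  filter_upwards [isOpen_lt1.mem_nhds hx] with y hy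
  have h1 : 0 < 1 - y ^ 2 := by simpa [sub_pos] using hy
  rw [bump1_eq, expNegInvGlue, if_neg (not_le.2 h1)]

lemma bump1_eventually_zero {x : ℝ} (hx : 1 < x ^ 2) :
    bump1 =ᶠ[𝓝 x] fun _ => (0 : ℝ) := by
  filter_upwards [isOpen_gt1.mem_nhds hx] with y hy
  have h1 : 1 - y ^ 2 ≤ 0 := by have h2 : (1:ℝ) < y ^ 2 := hy; linarith
  rw [bump1_eq, expNegInvGlue.zero_of_nonpos h1, mul_zero]

lemma hasDerivAt_v {x : ℝ} (hx : x ^ 2 < 1) :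
    HasDerivAt (fun y : ℝ => -(1 - y ^ 2)⁻¹) (-(2 * x) / (1 - x ^ 2) ^ 2) x := by
  have hs : (0 : ℝ) < 1 - x ^ 2 := by linarith
  have h0 : HasDerivAt (fun y : ℝ => 1 - y ^ 2) (-(2 * x)) x := by
    have := (hasDerivAt_pow 2 x).const_sub 1
    refine this.congr_deriv ?_
    push_cast
    ring
  have h1 := (h0.inv (ne_of_gt hs)).neg
  refine h1.congr_deriv ?_
  ring

lemma hasDerivAt_bump1 {x : ℝ} (hx : x ^ 2 < 1) : HasDerivAt bump1 (D1 x) x := by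
  have hφ : HasDerivAt (fun y : ℝ => Real.exp 1 * Real.exp (-(1 - y ^ 2)⁻¹)) (D1 x) x := by
    have h := ((hasDerivAt_v hx).exp).const_mul (Real.exp 1)
    refine h.congr_deriv ?_
    unfold D1
    ring
  exact hφ.congr_of_eventuallyEq (bump1_eventually_phi hx)

lemma deriv_bump1_eq {x : ℝ} (hx : x ^ 2 < 1) : deriv bump1 x = D1 x :=
  (hasDerivAt_bump1 hx).deriv

lemma deriv_bump1_zero {x : ℝ} (hx : 1 < x ^ 2) : deriv bump1 x = 0 := by
  rw [(bump1_eventually_zero hx).deriv_eq]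
  exact deriv_const x 0

lemma hasDerivAt_D1 {x : ℝ} (hx : x ^ 2 < 1) : HasDerivAt D1 (D2 x) x := by
  have hs : (0 : ℝ) < 1 - x ^ 2 := by linarith
  have h0 : HasDerivAt (fun y : ℝ => 1 - y ^ 2) (-(2 * x)) x := by
    have := (hasDerivAt_pow 2 x).const_sub 1
    refine this.congr_deriv ?_
    push_cast
    ring
  have hB : HasDerivAt (fun y : ℝ => Real.exp 1 * Real.exp (-(1 - y ^ 2)⁻¹))
      (Real.exp 1 * (Real.exp (-(1 - x ^ 2)⁻¹) * (-(2 * x) / (1 - x ^ 2) ^ 2))) x :=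
    ((hasDerivAt_v hx).exp).const_mul (Real.exp 1)
  have hnum : HasDerivAt (fun y : ℝ => -(2 * y)) (-2) x := by
    have h := ((hasDerivAt_id x).const_mul (2 : ℝ)).neg
    exact h.congr_deriv (by norm_num)
  have hden : HasDerivAt (fun y : ℝ => (1 - y ^ 2) ^ 2) (2 * (1 - x ^ 2) * (-(2 * x))) x := by
    have := h0.pow 2
    refine this.congr_deriv ?_
    push_cast
    ring
  have hq : HasDerivAt (fun y : ℝ => -(2 * y) / (1 - y ^ 2) ^ 2)
      ((-2 * (1 - x ^ 2) ^ 2 - (-(2 * x)) * (2 * (1 - x ^ 2) * (-(2 * x)))) / ((1 - x ^ 2) ^ 2) ^ 2)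
      x := hnum.div hden (by positivity)
  have h := hB.mul hq
  have heq : D1 = fun y : ℝ => (Real.exp 1 * Real.exp (-(1 - y ^ 2)⁻¹)) * (-(2 * y) / (1 - y ^ 2) ^ 2) := by
    funext y; unfold D1; ring
  rw [heq]
  refine h.congr_deriv ?_
  unfold D2
  field_simp
  ring

end S12

namespace S12

lemma numeric : 8 * Real.exp 1 ^ 2 + 1024 ≤ 54 * Real.exp 1 ^ 3 := by
  have he := Real.exp_one_gt_d9
  nlinarith [Real.exp_pos 1]

lemma D1_bound {x : ℝ} (hx : x ^ 2 < 1) : |D1 x| ≤ 3 := by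
  have hs : (0 : ℝ) < 1 - x ^ 2 := by linarith
  set s : ℝ := 1 - x ^ 2 with hsdef
  set E : ℝ := Real.exp (-s⁻¹) with hEdef
  have hEpos : 0 < E := Real.exp_pos _
  have hE2 : E * Real.exp 1 ^ 2 ≤ 4 * s ^ 2 := exp_key2 hs
  have he := Real.exp_one_gt_d9
  have hxabs : |x| ≤ 1 := by nlinarith [sq_abs x, abs_nonneg x]
  have hd : D1 x = Real.exp 1 * E * (-(2 * x)) / s ^ 2 := by
    unfold D1; rw [← hsdef, ← hEdef]; ring
  rw [hd, abs_div, abs_of_pos (pow_pos hs 2), div_le_iff₀ (pow_pos hs 2)]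
  have habs : |Real.exp 1 * E * (-(2 * x))| = Real.exp 1 * E * (2 * |x|) := by
    rw [abs_mul, abs_mul, abs_of_pos (Real.exp_pos 1), abs_of_pos hEpos, abs_neg, abs_mul]
    norm_num
  rw [habs]
  have h1 : Real.exp 1 * E * (2 * |x|) ≤ Real.exp 1 * E * 2 := by
    have h0 : (0:ℝ) ≤ Real.exp 1 * E := by positivity
    have h0' : 2 * |x| ≤ 2 := by linarith
    exact mul_le_mul_of_nonneg_left h0' h0
  have h2 : Real.exp 1 * E * 2 ≤ 3 * s ^ 2 := by
    nlinarith [hE2, Real.exp_pos 1, sq_nonneg s, mul_pos (Real.exp_pos 1) hEpos]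
  linarith

lemma D2_bound {x : ℝ} (hx : x ^ 2 < 1) : |D2 x| ≤ 54 := by
  have hs : (0 : ℝ) < 1 - x ^ 2 := by linarith
  have hs1 : 1 - x ^ 2 ≤ 1 := by nlinarith [sq_nonneg x]
  set s : ℝ := 1 - x ^ 2 with hsdef
  set E : ℝ := Real.exp (-s⁻¹) with hEdef
  have hEpos : 0 < E := Real.exp_pos _
  have hE2 : E * Real.exp 1 ^ 2 ≤ 4 * s ^ 2 := exp_key2 hs
  have hE4 : E * Real.exp 1 ^ 4 ≤ 256 * s ^ 4 := exp_key4 hs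
  have hx0 : 0 ≤ x ^ 2 := sq_nonneg x
  have hx1 : x ^ 2 ≤ 1 := hx.le
  have hd : D2 x = Real.exp 1 * E * (4 * x ^ 2 - 2 * s ^ 2 - 8 * x ^ 2 * s) / s ^ 4 := by
    unfold D2; rw [← hsdef, ← hEdef]; ring
  have hN : |4 * x ^ 2 - 2 * s ^ 2 - 8 * x ^ 2 * s| ≤ 2 * s ^ 2 + 4 := by
    rw [abs_le]
    constructor
    · nlinarith [sq_nonneg (1 - s), mul_nonneg hx0 hs.le]
    · nlinarith [mul_nonneg hx0 hs.le, mul_nonneg (mul_nonneg hx0 hs.le) hs.le]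
  have key : Real.exp 1 * E * (2 * s ^ 2 + 4) ≤ 54 * s ^ 4 := by
    have h3 : (0 : ℝ) < Real.exp 1 ^ 3 := by positivity
    rw [← mul_le_mul_iff_of_pos_right h3]
    calc Real.exp 1 * E * (2 * s ^ 2 + 4) * Real.exp 1 ^ 3
        = 2 * s ^ 2 * Real.exp 1 ^ 2 * (E * Real.exp 1 ^ 2) + 4 * (E * Real.exp 1 ^ 4) := by
          ring
      _ ≤ 2 * s ^ 2 * Real.exp 1 ^ 2 * (4 * s ^ 2) + 4 * (256 * s ^ 4) := by
          have t1 : 0 ≤ 2 * s ^ 2 * Real.exp 1 ^ 2 := by positivity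
          nlinarith [mul_le_mul_of_nonneg_left hE2 t1]
      _ = (8 * Real.exp 1 ^ 2 + 1024) * s ^ 4 := by ring
      _ ≤ 54 * Real.exp 1 ^ 3 * s ^ 4 := by
          nlinarith [numeric, pow_nonneg hs.le 4]
      _ = 54 * s ^ 4 * Real.exp 1 ^ 3 := by ring
  rw [hd, abs_div, abs_of_pos (pow_pos hs 4), div_le_iff₀ (pow_pos hs 4)]
  have habs : |Real.exp 1 * E * (4 * x ^ 2 - 2 * s ^ 2 - 8 * x ^ 2 * s)|
      = Real.exp 1 * E * |4 * x ^ 2 - 2 * s ^ 2 - 8 * x ^ 2 * s| := by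
    rw [abs_mul, abs_mul, abs_of_pos (Real.exp_pos 1), abs_of_pos hEpos]
  rw [habs]
  calc Real.exp 1 * E * |4 * x ^ 2 - 2 * s ^ 2 - 8 * x ^ 2 * s|
      ≤ Real.exp 1 * E * (2 * s ^ 2 + 4) := by
        have : 0 ≤ Real.exp 1 * E := by positivity
        exact mul_le_mul_of_nonneg_left hN this
    _ ≤ 54 * s ^ 4 := key

end S12

namespace S12

lemma dense_ne : Dense {y : ℝ | y ≠ 1 ∧ y ≠ -1} := by
  have h := (dense_compl_singleton (1 : ℝ)).inter_of_isOpen_right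
    (dense_compl_singleton (-1 : ℝ)) isOpen_compl_singleton
  have he : ({(1:ℝ)}ᶜ ∩ {(-1:ℝ)}ᶜ : Set ℝ) = {y : ℝ | y ≠ 1 ∧ y ≠ -1} := by
    ext y; simp [Set.mem_compl_iff]
  rwa [he] at h

lemma sq_cases {y : ℝ} (h1 : y ≠ 1) (h2 : y ≠ -1) : y ^ 2 < 1 ∨ 1 < y ^ 2 := by
  rcases lt_trichotomy (y ^ 2) 1 with h | h | h
  · exact Or.inl h
  · exfalso
    have : (y - 1) * (y + 1) = 0 := by nlinarith
    rcases mul_eq_zero.1 this with h' | h'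
    · exact h1 (by linarith)
    · exact h2 (by linarith)
  · exact Or.inr h

lemma bound_of_dense {h : ℝ → ℝ} {C : ℝ} (hcont : Continuous h)
    (hb : ∀ y : ℝ, y ^ 2 < 1 ∨ 1 < y ^ 2 → |h y| ≤ C) : ∀ x, |h x| ≤ C := by
  intro x
  have hC : IsClosed {y : ℝ | |h y| ≤ C} := isClosed_le hcont.abs continuous_const
  have hsub : {y : ℝ | y ≠ 1 ∧ y ≠ -1} ⊆ {y : ℝ | |h y| ≤ C} := by
    rintro y ⟨h1, h2⟩
    exact hb y (sq_cases h1 h2)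
  have h5 : closure {y : ℝ | y ≠ 1 ∧ y ≠ -1} ⊆ {y : ℝ | |h y| ≤ C} :=
    hC.closure_subset_iff.2 hsub
  rw [dense_ne.closure_eq] at h5
  exact h5 (Set.mem_univ x)

lemma deriv_bump1_contDiff : ContDiff ℝ (∞ : WithTop ℕ∞) (deriv bump1) :=
  (contDiff_infty_iff_deriv.mp (bump1_contDiff (n := ⊤))).2

lemma deriv_bump1_bound (x : ℝ) : |deriv bump1 x| ≤ 3 := by
  refine bound_of_dense ((bump1_contDiff (n := ⊤)).continuous_deriv (by norm_num)) ?_ x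
  intro y hy
  rcases hy with h | h
  · rw [deriv_bump1_eq h]; exact D1_bound h
  · rw [deriv_bump1_zero h]; norm_num

lemma deriv2_bump1_bound (x : ℝ) : |deriv (deriv bump1) x| ≤ 54 := by
  refine bound_of_dense (deriv_bump1_contDiff.continuous_deriv (by norm_num)) ?_ x
  intro y hy
  rcases hy with h | h
  · have hev : deriv bump1 =ᶠ[𝓝 y] D1 := by
      filter_upwards [isOpen_lt1.mem_nhds h] with w hw
      exact deriv_bump1_eq hw
    rw [hev.deriv_eq, (hasDerivAt_D1 h).deriv]
    exact D2_bound h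
  · have hev : deriv bump1 =ᶠ[𝓝 y] fun _ => (0 : ℝ) := by
      filter_upwards [isOpen_gt1.mem_nhds h] with w hw
      exact deriv_bump1_zero hw
    rw [hev.deriv_eq, deriv_const]
    norm_num

lemma bump1_lip (a b : ℝ) : |bump1 a - bump1 b| ≤ 3 * |a - b| := by
  have h := Convex.norm_image_sub_le_of_norm_deriv_le (s := Set.univ) (f := bump1) (C := 3)
    (fun y _ => ((bump1_contDiff (n := 1)).differentiable (by norm_num)).differentiableAt)
    (fun y _ => by simpa [Real.norm_eq_abs] using deriv_bump1_bound y)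
    convex_univ (Set.mem_univ b) (Set.mem_univ a)
  simpa [Real.norm_eq_abs] using h

lemma deriv_bump1_lip (a b : ℝ) : |deriv bump1 a - deriv bump1 b| ≤ 54 * |a - b| := by
  have h := Convex.norm_image_sub_le_of_norm_deriv_le (s := Set.univ) (f := deriv bump1) (C := 54)
    (fun y _ => (deriv_bump1_contDiff.differentiable (by norm_num)).differentiableAt)
    (fun y _ => by simpa [Real.norm_eq_abs] using deriv2_bump1_bound y)
    convex_univ (Set.mem_univ b) (Set.mem_univ a)
  simpa [Real.norm_eq_abs] using h

lemma bump1_deriv_abs_le (a : ℝ) : |deriv bump1 a| ≤ 3 := deriv_bump1_bound a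

end S12

namespace S12

open Finset in
lemma bump_hasFDerivAt {d : ℕ} (α η : ℝ) (hη : η ≠ 0) (z x : Fin d → ℝ) :
    HasFDerivAt (bump d α η z)
      (α • ∑ j, (∏ k ∈ Finset.univ.erase j, bump1 ((x k - z k) / η)) •
        ((deriv bump1 ((x j - z j) / η) * (1 / η)) •
          (ContinuousLinearMap.proj j : (Fin d → ℝ) →L[ℝ] ℝ))) x := by
  have hfac : ∀ k : Fin d, HasFDerivAt (fun x : Fin d → ℝ => bump1 ((x k - z k) / η))
      ((deriv bump1 ((x k - z k) / η) * (1 / η)) •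
        (ContinuousLinearMap.proj k : (Fin d → ℝ) →L[ℝ] ℝ)) x := by
    intro k
    have h1 : HasDerivAt (fun t : ℝ => (t - z k) / η) (1 / η) (x k) := by
      have := ((hasDerivAt_id (x k)).sub_const (z k)).div_const η
      simpa using this
    have h2 : HasDerivAt bump1 (deriv bump1 ((x k - z k) / η)) ((x k - z k) / η) :=
      (((bump1_contDiff (n := 1)).differentiable (by norm_num)) _).hasDerivAt
    have h3 := h2.comp (x k) h1
    exact h3.comp_hasFDerivAt x
      (ContinuousLinearMap.proj k : (Fin d → ℝ) →L[ℝ] ℝ).hasFDerivAt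
  have hp := HasFDerivAt.finset_prod (u := Finset.univ)
    (fun (k : Fin d) (_ : k ∈ Finset.univ) => hfac k)
  have h4 := hp.const_mul α
  exact h4

open Finset in
lemma bump_grad {d : ℕ} (α η : ℝ) (hη : η ≠ 0) (z x : Fin d → ℝ) (j : Fin d) :
    gradVec d (bump d α η z) x j =
      α * ((∏ k ∈ Finset.univ.erase j, bump1 ((x k - z k) / η)) *
        (deriv bump1 ((x j - z j) / η) * (1 / η))) := by
  show fderiv ℝ (bump d α η z) x (Pi.single j 1) = _
  rw [(bump_hasFDerivAt α η hη z x).fderiv]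
  simp [ContinuousLinearMap.sum_apply, ContinuousLinearMap.proj_apply, Pi.single_apply,
    Finset.sum_ite_eq', mul_comm, mul_assoc, mul_left_comm]

end S12

namespace S12

open Finset in
lemma abs_prod_sub_prod {ι : Type*} [DecidableEq ι] (s : Finset ι) (a b : ι → ℝ)
    (ha0 : ∀ k, 0 ≤ a k) (ha1 : ∀ k, a k ≤ 1) (hb0 : ∀ k, 0 ≤ b k) (hb1 : ∀ k, b k ≤ 1) :
    |∏ k ∈ s, a k - ∏ k ∈ s, b k| ≤ ∑ k ∈ s, |a k - b k| := by
  induction s using Finset.induction_on with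
  | empty => simp
  | insert i t hi ih =>
    rw [Finset.prod_insert hi, Finset.prod_insert hi, Finset.sum_insert hi]
    have hpa : 0 ≤ ∏ k ∈ t, a k := Finset.prod_nonneg fun k _ => ha0 k
    have hpa1 : ∏ k ∈ t, a k ≤ 1 := Finset.prod_le_one (fun k _ => ha0 k) fun k _ => ha1 k
    have hbi : |b i| ≤ 1 := abs_le.2 ⟨by linarith [hb0 i], hb1 i⟩
    calc |a i * ∏ k ∈ t, a k - b i * ∏ k ∈ t, b k|
        = |(a i - b i) * ∏ k ∈ t, a k + b i * (∏ k ∈ t, a k - ∏ k ∈ t, b k)| := by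
          ring_nf
      _ ≤ |(a i - b i) * ∏ k ∈ t, a k| + |b i * (∏ k ∈ t, a k - ∏ k ∈ t, b k)| := abs_add_le _ _
      _ = |a i - b i| * |∏ k ∈ t, a k| + |b i| * |∏ k ∈ t, a k - ∏ k ∈ t, b k| := by
          rw [abs_mul, abs_mul]
      _ ≤ |a i - b i| * 1 + 1 * (∑ k ∈ t, |a k - b k|) := by
          have h1 : |∏ k ∈ t, a k| ≤ 1 := abs_le.2 ⟨by linarith, hpa1⟩
          have h2 : |b i| * |∏ k ∈ t, a k - ∏ k ∈ t, b k| ≤ 1 * ∑ k ∈ t, |a k - b k| :=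
            mul_le_mul hbi ih (abs_nonneg _) (by norm_num)
          have h3 : |a i - b i| * |∏ k ∈ t, a k| ≤ |a i - b i| * 1 :=
            mul_le_mul_of_nonneg_left h1 (abs_nonneg _)
          linarith
      _ = |a i - b i| + ∑ k ∈ t, |a k - b k| := by ring

end S12

/-- With `η = (132εd·2^{1-γ₁}/c₁)^{1/(1+γ₁)} ≤ 1/4`, for every `z ∈ ℝ^d`
the restriction of `f_{2ε,η,z}` to `[0,1]^d` is `(c₁,γ₁)`-gradient-Hölder; in particular
`f_{2ε,η,z}` is continuously differentiable on `ℝ^d` and its gradient satisfies the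
`(c₁,γ₁)`-Hölder bound (in sup-norm) on `[0,1]^d`. -/
theorem stmt12 (d : ℕ) (hd : 1 ≤ d) (c₁ γ₁ ε η : ℝ) (hc : 0 < c₁)
    (hγ : γ₁ ∈ Set.Ioc (0 : ℝ) 1) (hε : 0 < ε)
    (hη : η = (132 * ε * (d : ℝ) * (2 : ℝ) ^ (1 - γ₁) / c₁) ^ (1 / (1 + γ₁)))
    (hη4 : η ≤ 1 / 4) :
    ∀ z : Fin d → ℝ,
      GradHolderOn d c₁ γ₁ (unitCube d) (bump d (2 * ε) η z) ∧
      ContDiff ℝ 1 (bump d (2 * ε) η z) ∧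
      ∀ x ∈ unitCube d, ∀ y ∈ unitCube d,
        ‖gradVec d (bump d (2 * ε) η z) x - gradVec d (bump d (2 * ε) η z) y‖
          ≤ c₁ * ‖x - y‖ ^ γ₁ := by
  intro z
  obtain ⟨hγ0, hγ1⟩ := hγ
  have hd1 : (1 : ℝ) ≤ d := by exact_mod_cast hd
  have hd0 : (0 : ℝ) < d := by linarith
  have hB : 0 < 132 * ε * (d : ℝ) * (2 : ℝ) ^ (1 - γ₁) / c₁ := by
    apply div_pos _ hc
    have h2 : (0 : ℝ) < (2 : ℝ) ^ (1 - γ₁) := Real.rpow_pos_of_pos two_pos _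
    have h3 : (0 : ℝ) < 132 * ε := by linarith
    exact mul_pos (mul_pos h3 hd0) h2
  have hηpos : 0 < η := by rw [hη]; exact Real.rpow_pos_of_pos hB _
  have hηne : η ≠ 0 := ne_of_gt hηpos
  have h1γ : (0 : ℝ) < 1 + γ₁ := by linarith
  have hkey : c₁ * η ^ (1 + γ₁) = 132 * ε * d * (2 : ℝ) ^ (1 - γ₁) := by
    have h2 : η ^ (1 + γ₁) = 132 * ε * d * (2 : ℝ) ^ (1 - γ₁) / c₁ := by
      rw [hη, ← Real.rpow_mul hB.le, one_div_mul_cancel (ne_of_gt h1γ), Real.rpow_one]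
    rw [h2]; field_simp
  have hgrad : ∀ (x : Fin d → ℝ) (j : Fin d), gradVec d (bump d (2 * ε) η z) x j =
      2 * ε * ((∏ k ∈ Finset.univ.erase j, bump1 ((x k - z k) / η)) *
        (deriv bump1 ((x j - z j) / η) * (1 / η))) :=
    fun x j => S12.bump_grad _ _ hηne z x j
  have hcoord : ∀ (x y : Fin d → ℝ) (k : Fin d),
      |(x k - z k) / η - (y k - z k) / η| ≤ ‖x - y‖ * (1 / η) := by
    intro x y k
    have h1 : (x k - z k) / η - (y k - z k) / η = (x k - y k) * (1 / η) := by
      field_simp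
      ring
    rw [h1, abs_mul, abs_of_pos (by positivity : (0 : ℝ) < 1 / η)]
    have h2 : |x k - y k| ≤ ‖x - y‖ := by
      have h3 := norm_le_pi_norm (x - y) k
      simpa [Real.norm_eq_abs] using h3
    exact mul_le_mul_of_nonneg_right h2 (by positivity)
  have hP1 : ∀ (x : Fin d → ℝ) (j : Fin d),
      |∏ k ∈ Finset.univ.erase j, bump1 ((x k - z k) / η)| ≤ 1 := by
    intro x j
    rw [abs_of_nonneg (Finset.prod_nonneg fun k _ => S12.bump1_nonneg _)]
    exact Finset.prod_le_one (fun k _ => S12.bump1_nonneg _) fun k _ => S12.bump1_le_one _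
  have hcomp_sup : ∀ (x y : Fin d → ℝ) (j : Fin d),
      |gradVec d (bump d (2 * ε) η z) x j - gradVec d (bump d (2 * ε) η z) y j|
        ≤ 12 * ε * (1 / η) := by
    intro x y j
    have hone : ∀ w : Fin d → ℝ, |gradVec d (bump d (2 * ε) η z) w j| ≤ 6 * ε * (1 / η) := by
      intro w
      set P := ∏ k ∈ Finset.univ.erase j, bump1 ((w k - z k) / η) with hPdef
      set A := deriv bump1 ((w j - z j) / η) with hAdef
      rw [hgrad w j, ← hPdef, ← hAdef]
      have habs : |2 * ε * (P * (A * (1 / η)))| = 2 * ε * (|P| * (|A| * (1 / η))) := by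
        rw [abs_mul (2 * ε), abs_mul P, abs_mul A,
          abs_of_pos (show (0 : ℝ) < 2 * ε by linarith),
          abs_of_pos (show (0 : ℝ) < 1 / η by positivity)]
      rw [habs]
      have hb1 : |P| ≤ 1 := hP1 w j
      have hb2 : |A| ≤ 3 := S12.deriv_bump1_bound ((w j - z j) / η)
      have h0 : (0 : ℝ) ≤ 1 / η := by positivity
      have h4 : |A| * (1 / η) ≤ 3 * (1 / η) := mul_le_mul_of_nonneg_right hb2 h0
      have h5 : |P| * (|A| * (1 / η)) ≤ 1 * (3 * (1 / η)) :=
        mul_le_mul hb1 h4 (by positivity) (by norm_num)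
      calc 2 * ε * (|P| * (|A| * (1 / η))) ≤ 2 * ε * (1 * (3 * (1 / η))) :=
            mul_le_mul_of_nonneg_left h5 (by positivity)
        _ = 6 * ε * (1 / η) := by ring
    calc |gradVec d (bump d (2 * ε) η z) x j - gradVec d (bump d (2 * ε) η z) y j|
        ≤ |gradVec d (bump d (2 * ε) η z) x j| + |gradVec d (bump d (2 * ε) η z) y j| :=
          abs_sub _ _
      _ ≤ 6 * ε * (1 / η) + 6 * ε * (1 / η) := add_le_add (hone x) (hone y)
      _ = 12 * ε * (1 / η) := by ring
  have hcomp_lip : ∀ (x y : Fin d → ℝ) (j : Fin d),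
      |gradVec d (bump d (2 * ε) η z) x j - gradVec d (bump d (2 * ε) η z) y j|
        ≤ 132 * ε * d * (1 / η) * (1 / η) * ‖x - y‖ := by
    intro x y j
    have ht0 : (0 : ℝ) ≤ ‖x - y‖ := norm_nonneg _
    set t := ‖x - y‖ with htdef
    set P1 := ∏ k ∈ Finset.univ.erase j, bump1 ((x k - z k) / η) with hP1def
    set P2 := ∏ k ∈ Finset.univ.erase j, bump1 ((y k - z k) / η) with hP2def
    set A1 := deriv bump1 ((x j - z j) / η) with hA1def
    set A2 := deriv bump1 ((y j - z j) / η) with hA2def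
    have hAA : |A1 - A2| ≤ 54 * (t * (1 / η)) := by
      refine le_trans (S12.deriv_bump1_lip _ _) ?_
      have := hcoord x y j
      nlinarith [this]
    have hPP : |P1 - P2| ≤ (d : ℝ) * (3 * (t * (1 / η))) := by
      have h6 := S12.abs_prod_sub_prod (Finset.univ.erase j)
        (fun k => bump1 ((x k - z k) / η)) (fun k => bump1 ((y k - z k) / η))
        (fun k => S12.bump1_nonneg _) (fun k => S12.bump1_le_one _)
        (fun k => S12.bump1_nonneg _) (fun k => S12.bump1_le_one _)
      refine le_trans h6 ?_
      have h7 : ∀ k ∈ Finset.univ.erase j,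
          |bump1 ((x k - z k) / η) - bump1 ((y k - z k) / η)| ≤ 3 * (t * (1 / η)) := by
        intro k _
        refine le_trans (S12.bump1_lip _ _) ?_
        have := hcoord x y k
        nlinarith [this]
      refine le_trans (Finset.sum_le_sum h7) ?_
      rw [Finset.sum_const, nsmul_eq_mul]
      have hcard : ((Finset.univ.erase j).card : ℝ) ≤ (d : ℝ) := by
        have h8 : (Finset.univ.erase j).card ≤ Finset.univ.card := Finset.card_erase_le
        have h9 : (Finset.univ : Finset (Fin d)).card = d := by simp
        exact_mod_cast h8.trans_eq h9
      have h10 : (0 : ℝ) ≤ 3 * (t * (1 / η)) := by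
        have : (0 : ℝ) ≤ 1 / η := by positivity
        nlinarith
      exact mul_le_mul_of_nonneg_right hcard h10
    have hA2b : |A2| ≤ 3 := S12.deriv_bump1_bound _
    have hP1b : |P1| ≤ 1 := hP1 x j
    rw [hgrad x j, hgrad y j, ← hP1def, ← hP2def, ← hA1def, ← hA2def]
    have hsplit : 2 * ε * (P1 * (A1 * (1 / η))) - 2 * ε * (P2 * (A2 * (1 / η)))
        = 2 * ε * (1 / η) * (P1 * (A1 - A2) + (P1 - P2) * A2) := by ring
    rw [hsplit]
    have hX1 : |P1 * (A1 - A2)| ≤ 54 * (t * (1 / η)) := by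
      rw [abs_mul]
      calc |P1| * |A1 - A2| ≤ 1 * (54 * (t * (1 / η))) :=
            mul_le_mul hP1b hAA (abs_nonneg _) (by norm_num)
        _ = 54 * (t * (1 / η)) := one_mul _
    have hX2 : |(P1 - P2) * A2| ≤ ((d : ℝ) * (3 * (t * (1 / η)))) * 3 := by
      rw [abs_mul]
      have h11 : (0 : ℝ) ≤ (d : ℝ) * (3 * (t * (1 / η))) :=
        le_trans (abs_nonneg _) hPP
      exact mul_le_mul hPP hA2b (abs_nonneg _) h11
    have habs2 : |2 * ε * (1 / η) * (P1 * (A1 - A2) + (P1 - P2) * A2)|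
        = 2 * ε * (1 / η) * |P1 * (A1 - A2) + (P1 - P2) * A2| := by
      rw [abs_mul, abs_of_pos (show (0 : ℝ) < 2 * ε * (1 / η) by positivity)]
    rw [habs2]
    have hsum : |P1 * (A1 - A2) + (P1 - P2) * A2|
        ≤ 54 * (t * (1 / η)) + ((d : ℝ) * (3 * (t * (1 / η)))) * 3 :=
      le_trans (abs_add_le _ _) (add_le_add hX1 hX2)
    have h12 : 2 * ε * (1 / η) * |P1 * (A1 - A2) + (P1 - P2) * A2|
        ≤ 2 * ε * (1 / η) * (54 * (t * (1 / η)) + ((d : ℝ) * (3 * (t * (1 / η)))) * 3) :=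
      mul_le_mul_of_nonneg_left hsum (by positivity)
    refine le_trans h12 ?_
    have hq : (0 : ℝ) ≤ ε * t * (1 / η) * (1 / η) := by
      have h13 : (0 : ℝ) ≤ 1 / η := by positivity
      have h14 : (0 : ℝ) ≤ ε := hε.le
      exact mul_nonneg (mul_nonneg (mul_nonneg h14 ht0) h13) h13
    linarith [mul_nonneg hq (show (0 : ℝ) ≤ 114 * (d : ℝ) - 108 by linarith)]
  have main : ∀ x y : Fin d → ℝ,
      ‖gradVec d (bump d (2 * ε) η z) x - gradVec d (bump d (2 * ε) η z) y‖
        ≤ c₁ * ‖x - y‖ ^ γ₁ := by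
    intro x y
    have ht0 : (0 : ℝ) ≤ ‖x - y‖ := norm_nonneg _
    rcases eq_or_lt_of_le ht0 with h0 | htpos
    · have hxy : x = y := by
        rw [← sub_eq_zero]
        exact norm_eq_zero.1 h0.symm
      subst hxy
      simp only [sub_self, norm_zero]
      positivity
    · have hRpos : (0 : ℝ) ≤ c₁ * ‖x - y‖ ^ γ₁ := by positivity
      rw [pi_norm_le_iff_of_nonneg hRpos]
      intro j
      rw [Pi.sub_apply, Real.norm_eq_abs]
      rcases le_total ‖x - y‖ (2 * η) with hsmall | hbig
      · refine le_trans (hcomp_lip x y j) ?_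
        set t := ‖x - y‖ with htdef
        have h1 : t ≤ t ^ γ₁ * (2 * η) ^ (1 - γ₁) := by
          have e1 : t = t ^ γ₁ * t ^ (1 - γ₁) := by
            rw [← Real.rpow_add htpos]
            norm_num
          calc t = t ^ γ₁ * t ^ (1 - γ₁) := e1
            _ ≤ t ^ γ₁ * (2 * η) ^ (1 - γ₁) :=
              mul_le_mul_of_nonneg_left
                (Real.rpow_le_rpow ht0 hsmall (show (0:ℝ) ≤ 1 - γ₁ by linarith))
                (Real.rpow_nonneg ht0 _)
        have e2 : 132 * ε * (d : ℝ) * (2 * η) ^ (1 - γ₁) = c₁ * η ^ (2 : ℕ) := by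
          rw [Real.mul_rpow (by norm_num : (0:ℝ) ≤ 2) hηpos.le, ← Real.rpow_natCast η 2,
            show ((2 : ℕ) : ℝ) = (1 + γ₁) + (1 - γ₁) from by ring, Real.rpow_add hηpos]
          linear_combination (- η ^ (1 - γ₁)) * hkey
        calc 132 * ε * (d : ℝ) * (1 / η) * (1 / η) * t
            ≤ 132 * ε * (d : ℝ) * (1 / η) * (1 / η) * (t ^ γ₁ * (2 * η) ^ (1 - γ₁)) :=
              mul_le_mul_of_nonneg_left h1 (by positivity)
          _ = t ^ γ₁ * (132 * ε * (d : ℝ) * (2 * η) ^ (1 - γ₁)) * ((1 / η) * (1 / η)) := by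
              ring
          _ = t ^ γ₁ * (c₁ * η ^ (2 : ℕ)) * ((1 / η) * (1 / η)) := by rw [e2]
          _ = c₁ * t ^ γ₁ := by field_simp
      · refine le_trans (hcomp_sup x y j) ?_
        set t := ‖x - y‖ with htdef
        have h2 : (2 * η) ^ γ₁ ≤ t ^ γ₁ := Real.rpow_le_rpow (by positivity) hbig hγ0.le
        have e7 : (2 : ℝ) ^ (1 - γ₁) * (2 : ℝ) ^ γ₁ = 2 := by
          rw [← Real.rpow_add (by norm_num : (0:ℝ) < 2)]
          norm_num
        have e6 : η ^ ((1:ℝ) + γ₁) = η * η ^ γ₁ := by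
          rw [Real.rpow_add hηpos, Real.rpow_one]
        have e5 : c₁ * (2 * η) ^ γ₁ * η = 264 * ε * (d : ℝ) := by
          rw [Real.mul_rpow (by norm_num : (0:ℝ) ≤ 2) hηpos.le]
          calc c₁ * ((2:ℝ) ^ γ₁ * η ^ γ₁) * η = (2:ℝ) ^ γ₁ * (c₁ * (η * η ^ γ₁)) := by ring
            _ = (2:ℝ) ^ γ₁ * (c₁ * η ^ ((1:ℝ) + γ₁)) := by rw [← e6]
            _ = (2:ℝ) ^ γ₁ * (132 * ε * (d : ℝ) * (2:ℝ) ^ (1 - γ₁)) := by rw [hkey]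
            _ = 132 * ε * (d : ℝ) * ((2:ℝ) ^ (1 - γ₁) * (2:ℝ) ^ γ₁) := by ring
            _ = 264 * ε * (d : ℝ) := by rw [e7]; ring
        have h3 : 12 * ε * (1 / η) ≤ c₁ * (2 * η) ^ γ₁ := by
          have h4 : c₁ * (2 * η) ^ γ₁ = 264 * ε * (d : ℝ) * (1 / η) := by
            rw [← e5]
            field_simp
          rw [h4]
          have h5 : (0 : ℝ) ≤ 1 / η := by positivity
          have h6 : (0 : ℝ) ≤ ε * (1 / η) := mul_nonneg hε.le h5
          linarith [mul_nonneg h6 (show (0:ℝ) ≤ 264 * (d : ℝ) - 12 by linarith)]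
        exact le_trans h3 (mul_le_mul_of_nonneg_left h2 hc.le)
  have hCD : ContDiff ℝ 1 (bump d (2 * ε) η z) := by
    show ContDiff ℝ 1 fun x : Fin d → ℝ => 2 * ε * ∏ j, bump1 ((x j - z j) / η)
    refine ContDiff.mul contDiff_const (contDiff_prod fun k _ => ?_)
    have hin : ContDiff ℝ 1 fun x : Fin d → ℝ => (x k - z k) / η :=
      (((ContinuousLinearMap.proj k : (Fin d → ℝ) →L[ℝ] ℝ).contDiff).sub contDiff_const).div_const η
    exact (S12.bump1_contDiff (n := 1)).comp hin
  exact ⟨⟨bump d (2 * ε) η z, hCD, fun x _ => rfl, fun x _ y _ => main x y⟩,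
    hCD, fun x _ y _ => main x y⟩
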